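/- Let n ≥ 1 and β > 0. Let A : ℝⁿ → ℝ^{n×n} be continuously differentiable with A(x) symmetric for every x, let b : ℝⁿ → ℝⁿ be continuous, and let ρ : ℝⁿ → (0,∞) be continuously differentiable. Then for all smooth compactly supported f, g : ℝⁿ → ℝ, ∫_{ℝⁿ} [b(x)·∇f(x) + β⁻¹∇·(A(x)∇f(x))] g(x) ρ(x) dx − ∫_{ℝⁿ} [b(x)·∇g(x) + β⁻¹∇·(A(x)∇g(x))] f(x) ρ(x) dx = ∫_{ℝⁿ} ⟨b(x) − β⁻¹A(x)∇log ρ(x), g(x)∇f(x) − f(x)∇g(x)⟩ ρ(x) dx. -/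

import Mathlib

open MeasureTheory Matrix

/-- The gradient of a scalar function on `ℝⁿ`, given by the partial derivatives. -/
noncomputable def grad {n : ℕ} (f : (Fin n → ℝ) → ℝ) (x : Fin n → ℝ) : Fin n → ℝ :=
  fun i => fderiv ℝ f x (Pi.single i 1)

/-- The divergence of a vector field on `ℝⁿ`. -/
noncomputable def dive {n : ℕ} (v : (Fin n → ℝ) → (Fin n → ℝ)) (x : Fin n → ℝ) : ℝ :=
  ∑ i, fderiv ℝ (fun y => v y i) x (Pi.single i 1)

lemma integral_dive_eq_zero {n : ℕ} (F : (Fin n → ℝ) → (Fin n → ℝ))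
    (hF : ContDiff ℝ 1 F) (hsupp : HasCompactSupport F) :
    ∫ x, dive F x = 0 := by
  cases n with
  | zero => simp [dive]
  | succ m =>
    obtain ⟨R₀, hR₀⟩ := hsupp.isBounded.subset_ball 0
    set R : ℝ := max R₀ 1 with hRdef
    have hR : tsupport F ⊆ Metric.ball 0 R :=
      hR₀.trans (Metric.ball_subset_ball (le_max_left _ _))
    have hRpos : (0:ℝ) < R := lt_of_lt_of_le one_pos (le_max_right _ _)
    set a : Fin (m+1) → ℝ := fun _ => -R with ha
    set bb : Fin (m+1) → ℝ := fun _ => R with hbb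
    have hle : a ≤ bb := fun i => by simp only [ha, hbb]; linarith
    have hdiff : Differentiable ℝ F := hF.differentiable one_ne_zero
    have hcomp : ∀ (x : Fin (m+1) → ℝ) (i : Fin (m+1)),
        fderiv ℝ (fun y => F y i) x (Pi.single i 1) = (fderiv ℝ F x) (Pi.single i 1) i := by
      intro x i
      have h1 : HasFDerivAt F (fderiv ℝ F x) x := (hdiff x).hasFDerivAt
      have h2 : HasFDerivAt (fun y => F y i)
          ((ContinuousLinearMap.proj i : ((Fin (m+1)) → ℝ) →L[ℝ] ℝ).comp (fderiv ℝ F x)) x := by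
        exact (ContinuousLinearMap.proj i).hasFDerivAt.comp x h1
      rw [h2.fderiv]; rfl
    have hdivec : Continuous (fun x => dive F x) := by
      apply continuous_finset_sum
      intro i _
      have : ContDiff ℝ 1 (fun y => F y i) := (contDiff_pi.mp hF) i
      have h0 : ContDiff ℝ 0 (fderiv ℝ (fun y => F y i)) :=
        this.fderiv_right (by norm_num)
      exact (contDiff_zero.mp h0).clm_apply continuous_const
    -- F vanishes outside the ball
    have hFzero : ∀ x : Fin (m+1) → ℝ, R ≤ ‖x‖ → F x = 0 := by
      intro x hx
      apply image_eq_zero_of_notMem_tsupport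
      intro hmem
      have := hR hmem
      simp only [Metric.mem_ball, dist_zero_right] at this
      linarith
    have hzero : ∀ x : Fin (m+1) → ℝ, x ∉ Set.Icc a bb → dive F x = 0 := by
      intro x hx
      have hxmem : x ∉ tsupport F := by
        intro hmem
        apply hx
        have hb := hR hmem
        simp only [Metric.mem_ball, dist_zero_right] at hb
        constructor <;> intro i <;>
        · have h1 : |x i| ≤ ‖x‖ := by
            simpa using norm_le_pi_norm x i
          simp only [ha, hbb]
          cases abs_le.mp h1 with
          | intro h2 h3 => first | linarith | linarith
      have hop : IsOpen (tsupport F)ᶜ := (isClosed_tsupport F).isOpen_compl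
      have hev : F =ᶠ[nhds x] 0 := by
        filter_upwards [hop.mem_nhds hxmem] with y hy
        exact image_eq_zero_of_notMem_tsupport hy
      unfold dive
      apply Finset.sum_eq_zero
      intro i _
      have hev' : (fun y => F y i) =ᶠ[nhds x] (fun _ => (0:ℝ)) := by
        filter_upwards [hev] with y hy
        simp [hy]
      rw [hev'.fderiv_eq, fderiv_fun_const]
      simp
    have hIcc : (∫ x, dive F x) = ∫ x in Set.Icc a bb, dive F x :=
      (setIntegral_eq_integral_of_forall_compl_eq_zero hzero).symm
    have Hi : IntegrableOn (fun x => ∑ i, (fderiv ℝ F x) (Pi.single i 1) i) (Set.Icc a bb) := by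
      have : (fun x => ∑ i, (fderiv ℝ F x) (Pi.single i 1) i) = fun x => dive F x := by
        funext x; unfold dive
        exact (Finset.sum_congr rfl fun i _ => (hcomp x i)).symm
      rw [this]
      exact hdivec.continuousOn.integrableOn_compact isCompact_Icc
    have key := MeasureTheory.integral_divergence_of_hasFDerivAt_off_countable a bb hle
      F (fun x => fderiv ℝ F x) (∅ : Set (Fin (m+1) → ℝ)) Set.countable_empty
      hF.continuous.continuousOn
      (fun x _ => (hdiff x).hasFDerivAt) Hi
    have hfaces : ∀ i : Fin (m+1),
        ((∫ x in Set.Icc (a ∘ i.succAbove) (bb ∘ i.succAbove), F (i.insertNth (bb i) x) i) -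
          ∫ x in Set.Icc (a ∘ i.succAbove) (bb ∘ i.succAbove), F (i.insertNth (a i) x) i) = 0 := by
      intro i
      have h1 : ∀ (c : ℝ), |c| = R → ∀ x : Fin m → ℝ, F (i.insertNth c x) i = 0 := by
        intro c hc x
        have : R ≤ ‖(i.insertNth c x : Fin (m+1) → ℝ)‖ := by
          calc R = |c| := hc.symm
          _ = ‖(i.insertNth c x : Fin (m+1) → ℝ) i‖ := by rw [Fin.insertNth_apply_same]; rfl
          _ ≤ ‖(i.insertNth c x : Fin (m+1) → ℝ)‖ := norm_le_pi_norm _ i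
        rw [hFzero _ this]; rfl
      rw [MeasureTheory.setIntegral_congr_fun measurableSet_Icc
            (fun x _ => h1 (bb i) (by simp [hbb, abs_of_pos hRpos]) x),
          MeasureTheory.setIntegral_congr_fun measurableSet_Icc
            (fun x _ => h1 (a i) (by simp [ha, abs_of_pos hRpos]) x)]
      simp
    rw [hIcc]
    have : (∫ x in Set.Icc a bb, dive F x)
        = ∫ x in Set.Icc a bb, ∑ i, (fderiv ℝ F x) (Pi.single i 1) i := by
      apply setIntegral_congr_fun measurableSet_Icc
      intro x _
      unfold dive
      exact Finset.sum_congr rfl fun i _ => hcomp x i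
    rw [this, key]
    exact Finset.sum_eq_zero fun i _ => hfaces i

section helpers

variable {n : ℕ}

/-- gradient components of a smooth function are `C¹`. -/
lemma gradf_contDiff {f : (Fin n → ℝ) → ℝ} (hf : ContDiff ℝ (⊤ : ℕ∞) f) (i : Fin n) :
    ContDiff ℝ 1 (fun y => grad f y i) := by
  have h1 : ContDiff ℝ 1 (fderiv ℝ f) := hf.fderiv_right (by exact WithTop.coe_le_coe.mpr le_top)
  exact h1.clm_apply contDiff_const

lemma mulVec_grad_contDiff {A : (Fin n → ℝ) → Matrix (Fin n) (Fin n) ℝ}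
    (hA : ∀ i j, ContDiff ℝ 1 fun x => A x i j)
    {f : (Fin n → ℝ) → ℝ} (hf : ContDiff ℝ (⊤ : ℕ∞) f) (i : Fin n) :
    ContDiff ℝ 1 (fun y => (A y *ᵥ grad f y) i) := by
  have : (fun y => (A y *ᵥ grad f y) i) = fun y => ∑ j, A y i j * grad f y j := by
    funext y; simp [Matrix.mulVec, dotProduct]
  rw [this]
  exact ContDiff.sum fun j _ => (hA i j).mul (gradf_contDiff hf j)

/-- symmetry of the matrix transfers to the bilinear form. -/
lemma symm_dot {A : Matrix (Fin n) (Fin n) ℝ} (hA : A.IsSymm) (u v : Fin n → ℝ) :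
    (A *ᵥ u) ⬝ᵥ v = (A *ᵥ v) ⬝ᵥ u := by
  simp only [Matrix.mulVec, dotProduct, Finset.sum_mul]
  rw [Finset.sum_comm]
  refine Finset.sum_congr rfl fun i _ => Finset.sum_congr rfl fun j _ => ?_
  rw [hA.apply i j]
  ring

end helpers

theorem stmt_5 (n : ℕ) (hn : 1 ≤ n) (β : ℝ) (hβ : 0 < β)
    (A : (Fin n → ℝ) → Matrix (Fin n) (Fin n) ℝ)
    (b : (Fin n → ℝ) → (Fin n → ℝ)) (ρ : (Fin n → ℝ) → ℝ)
    (hA : ∀ i j, ContDiff ℝ 1 fun x => A x i j) (hAsymm : ∀ x, (A x).IsSymm)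
    (hb : Continuous b)
    (hρ : ContDiff ℝ 1 ρ) (hρpos : ∀ x, 0 < ρ x) :
    ∀ f g : (Fin n → ℝ) → ℝ,
      ContDiff ℝ (⊤ : ℕ∞) f → HasCompactSupport f →
      ContDiff ℝ (⊤ : ℕ∞) g → HasCompactSupport g →
      (∫ x, (b x ⬝ᵥ grad f x + β⁻¹ * dive (fun y => (A y) *ᵥ grad f y) x) * g x * ρ x) -
        (∫ x, (b x ⬝ᵥ grad g x + β⁻¹ * dive (fun y => (A y) *ᵥ grad g y) x) * f x * ρ x) =
      ∫ x, ((b x - β⁻¹ • ((A x) *ᵥ grad (fun y => Real.log (ρ y)) x)) ⬝ᵥ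
        (g x • grad f x - f x • grad g x)) * ρ x := by
  intro f g hf hcf hg hcg
  have hf1 : ContDiff ℝ 1 f := hf.of_le (by exact_mod_cast le_top)
  have hg1 : ContDiff ℝ 1 g := hg.of_le (by exact_mod_cast le_top)
  set P : (Fin n → ℝ) → (Fin n → ℝ) := fun y => A y *ᵥ grad f y with hPdef
  set Q : (Fin n → ℝ) → (Fin n → ℝ) := fun y => A y *ᵥ grad g y with hQdef
  have hPc : ∀ i, ContDiff ℝ 1 (fun y => P y i) := mulVec_grad_contDiff hA hf
  have hQc : ∀ i, ContDiff ℝ 1 (fun y => Q y i) := mulVec_grad_contDiff hA hg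
  -- the compensating vector field
  set w : (Fin n → ℝ) → (Fin n → ℝ) :=
    fun y i => β⁻¹ * (ρ y * (g y * P y i - f y * Q y i)) with hwdef
  have hwc : ∀ i, ContDiff ℝ 1 (fun y => w y i) := fun i =>
    contDiff_const.mul (hρ.mul ((hg1.mul (hPc i)).sub (hf1.mul (hQc i))))
  have hwC : ContDiff ℝ 1 w := contDiff_pi.mpr hwc
  have hwsupp : HasCompactSupport w := by
    apply HasCompactSupport.intro (hcf.union hcg)
    intro x hx
    simp only [Set.mem_union, not_or] at hx
    have hfx : f x = 0 := image_eq_zero_of_notMem_tsupport hx.1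
    have hgx : g x = 0 := image_eq_zero_of_notMem_tsupport hx.2
    funext i
    simp [hwdef, hfx, hgx]
  -- zero outside a compact set for integrands
  have hK : IsCompact (tsupport f ∪ tsupport g) := hcf.union hcg
  -- continuity helpers
  have hgradc : ∀ (u : (Fin n → ℝ) → ℝ), ContDiff ℝ (⊤:ℕ∞) u → ∀ i,
      Continuous (fun y => grad u y i) := fun u hu i => (gradf_contDiff hu i).continuous
  have hdivec : ∀ (V : (Fin n → ℝ) → (Fin n → ℝ)), (∀ i, ContDiff ℝ 1 (fun y => V y i)) →
      Continuous (fun x => dive V x) := by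
    intro V hV
    apply continuous_finset_sum
    intro i _
    have h0 : ContDiff ℝ 0 (fderiv ℝ (fun y => V y i)) := (hV i).fderiv_right (by norm_num)
    exact (contDiff_zero.mp h0).clm_apply continuous_const
  -- log gradient
  have hρne : ∀ x, ρ x ≠ 0 := fun x => (hρpos x).ne'
  have hL : ContDiff ℝ 1 (fun y => Real.log (ρ y)) := hρ.log hρne
  have hgradL : ∀ x, grad (fun y => Real.log (ρ y)) x = (ρ x)⁻¹ • grad ρ x := by
    intro x
    funext i
    have h1 : HasFDerivAt (fun y => Real.log (ρ y)) ((ρ x)⁻¹ • fderiv ℝ ρ x) x :=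
      HasFDerivAt.log ((hρ.differentiable one_ne_zero x).hasFDerivAt) (hρne x)
    show fderiv ℝ (fun y => Real.log (ρ y)) x (Pi.single i 1) = _
    rw [h1.fderiv]
    simp [grad, smul_eq_mul]
  -- pointwise fderiv of w components
  have hwder : ∀ (x : Fin n → ℝ) (i : Fin n),
      fderiv ℝ (fun y => w y i) x (Pi.single i 1) =
        β⁻¹ * (ρ x * ((grad g x i * P x i + g x * fderiv ℝ (fun y => P y i) x (Pi.single i 1))
            - (grad f x i * Q x i + f x * fderiv ℝ (fun y => Q y i) x (Pi.single i 1)))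
          + (g x * P x i - f x * Q x i) * grad ρ x i) := by
    intro x i
    have dρ : DifferentiableAt ℝ ρ x := (hρ.differentiable one_ne_zero x)
    have dfx : DifferentiableAt ℝ f x := (hf1.differentiable one_ne_zero x)
    have dgx : DifferentiableAt ℝ g x := (hg1.differentiable one_ne_zero x)
    have dP : DifferentiableAt ℝ (fun y => P y i) x := ((hPc i).differentiable one_ne_zero x)
    have dQ : DifferentiableAt ℝ (fun y => Q y i) x := ((hQc i).differentiable one_ne_zero x)
    have dgP : DifferentiableAt ℝ (fun y => g y * P y i) x := dgx.mul dP
    have dfQ : DifferentiableAt ℝ (fun y => f y * Q y i) x := dfx.mul dQ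
    have dinner : DifferentiableAt ℝ (fun y => g y * P y i - f y * Q y i) x := dgP.sub dfQ
    have : (fun y => w y i) = fun y => β⁻¹ * (ρ y * (g y * P y i - f y * Q y i)) := rfl
    rw [this, fderiv_const_mul (dρ.fun_mul dinner) β⁻¹, fderiv_fun_mul dρ dinner,
      fderiv_fun_sub dgP dfQ, fderiv_fun_mul dgx dP, fderiv_fun_mul dfx dQ]
    simp only [ContinuousLinearMap.smul_apply, ContinuousLinearMap.add_apply,
      ContinuousLinearMap.sub_apply, smul_eq_mul]
    show β⁻¹ * (ρ x * ((g x * fderiv ℝ (fun y => P y i) x (Pi.single i 1)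
          + P x i * fderiv ℝ g x (Pi.single i 1))
        - (f x * fderiv ℝ (fun y => Q y i) x (Pi.single i 1)
          + Q x i * fderiv ℝ f x (Pi.single i 1)))
        + (g x * P x i - f x * Q x i) * fderiv ℝ ρ x (Pi.single i 1)) = _
    show _ = β⁻¹ * (ρ x * ((fderiv ℝ g x (Pi.single i 1) * P x i
          + g x * fderiv ℝ (fun y => P y i) x (Pi.single i 1))
        - (fderiv ℝ f x (Pi.single i 1) * Q x i
          + f x * fderiv ℝ (fun y => Q y i) x (Pi.single i 1)))
        + (g x * P x i - f x * Q x i) * fderiv ℝ ρ x (Pi.single i 1))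
    ring
  -- the divergence of w, pointwise
  have hdivw : ∀ x : Fin n → ℝ, dive w x =
      β⁻¹ * ρ x * (grad g x ⬝ᵥ P x) + β⁻¹ * ρ x * g x * dive P x
      - β⁻¹ * ρ x * (grad f x ⬝ᵥ Q x) - β⁻¹ * ρ x * f x * dive Q x
      + β⁻¹ * g x * (P x ⬝ᵥ grad ρ x) - β⁻¹ * f x * (Q x ⬝ᵥ grad ρ x) := by
    intro x
    have : dive w x = ∑ i,
        (β⁻¹ * ρ x * (grad g x i * P x i) + β⁻¹ * ρ x * g x
            * fderiv ℝ (fun y => P y i) x (Pi.single i 1)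
          - β⁻¹ * ρ x * (grad f x i * Q x i) - β⁻¹ * ρ x * f x
            * fderiv ℝ (fun y => Q y i) x (Pi.single i 1)
          + β⁻¹ * g x * (P x i * grad ρ x i) - β⁻¹ * f x * (Q x i * grad ρ x i)) := by
      unfold dive
      refine Finset.sum_congr rfl fun i _ => ?_
      rw [hwder x i]; ring
    rw [this]
    simp only [Finset.sum_add_distrib, Finset.sum_sub_distrib, ← Finset.mul_sum]
    unfold dive
    simp only [dotProduct]
  -- integrands
  set I₁ : (Fin n → ℝ) → ℝ :=
    fun x => (b x ⬝ᵥ grad f x + β⁻¹ * dive P x) * g x * ρ x with hI₁def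
  set I₂ : (Fin n → ℝ) → ℝ :=
    fun x => (b x ⬝ᵥ grad g x + β⁻¹ * dive Q x) * f x * ρ x with hI₂def
  set I₃ : (Fin n → ℝ) → ℝ :=
    fun x => ((b x - β⁻¹ • (A x *ᵥ grad (fun y => Real.log (ρ y)) x)) ⬝ᵥ
      (g x • grad f x - f x • grad g x)) * ρ x with hI₃def
  -- pointwise identity
  have hpt : ∀ x, I₁ x - I₂ x - I₃ x = dive w x := by
    intro x
    rw [hdivw x]
    simp only [hI₁def, hI₂def, hI₃def, hgradL x]
    rw [Matrix.mulVec_smul]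
    simp only [sub_dotProduct, dotProduct_sub, smul_dotProduct,
      dotProduct_smul, smul_eq_mul]
    -- symmetry facts
    have e1 : grad g x ⬝ᵥ P x = grad f x ⬝ᵥ Q x := by
      rw [dotProduct_comm, hPdef]
      rw [symm_dot (hAsymm x) (grad f x) (grad g x)]
      rw [dotProduct_comm]
    have e2 : P x ⬝ᵥ grad ρ x = (A x *ᵥ grad ρ x) ⬝ᵥ grad f x := by
      rw [hPdef, symm_dot (hAsymm x) (grad f x) (grad ρ x)]
    have e3 : Q x ⬝ᵥ grad ρ x = (A x *ᵥ grad ρ x) ⬝ᵥ grad g x := by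
      rw [hQdef, symm_dot (hAsymm x) (grad g x) (grad ρ x)]
    rw [e1, e2, e3]
    have hne := hρne x
    field_simp
    ring
  -- continuity of gradient components of C¹ functions
  have gradc : ∀ (u : (Fin n → ℝ) → ℝ), ContDiff ℝ 1 u → ∀ i,
      Continuous (fun y => grad u y i) := by
    intro u hu i
    have h0 : ContDiff ℝ 0 (fderiv ℝ u) := hu.fderiv_right (by norm_num)
    exact (contDiff_zero.mp h0).clm_apply continuous_const
  have hPcc : ∀ i, Continuous (fun y => P y i) := fun i => (hPc i).continuous
  have hQcc : ∀ i, Continuous (fun y => Q y i) := fun i => (hQc i).continuous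
  have hdotc : ∀ (v u : (Fin n → ℝ) → (Fin n → ℝ)),
      (∀ i, Continuous fun y => v y i) → (∀ i, Continuous fun y => u y i) →
      Continuous (fun x => v x ⬝ᵥ u x) := by
    intro v u hv hu
    have : (fun x => v x ⬝ᵥ u x) = fun x => ∑ i, v x i * u x i := by
      funext x; simp [dotProduct]
    rw [this]
    exact continuous_finset_sum _ fun i _ => (hv i).mul (hu i)
  have hbc : ∀ i, Continuous (fun y => b y i) := fun i => (continuous_apply i).comp hb
  have hcont₁ : Continuous I₁ :=
    (((hdotc b (fun y => grad f y) hbc (gradc f hf1)).add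
      (continuous_const.mul (hdivec P hPc))).mul hg1.continuous).mul hρ.continuous
  have hcont₂ : Continuous I₂ :=
    (((hdotc b (fun y => grad g y) hbc (gradc g hg1)).add
      (continuous_const.mul (hdivec Q hQc))).mul hf1.continuous).mul hρ.continuous
  have hALc : ∀ i, Continuous (fun y => (A y *ᵥ grad (fun z => Real.log (ρ z)) y) i) := by
    intro i
    have : (fun y => (A y *ᵥ grad (fun z => Real.log (ρ z)) y) i)
        = fun y => ∑ j, A y i j * grad (fun z => Real.log (ρ z)) y j := by
      funext y; simp [Matrix.mulVec, dotProduct]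
    rw [this]
    exact continuous_finset_sum _ fun j _ => (hA i j).continuous.mul (gradc _ hL j)
  have hcont₃ : Continuous I₃ := by
    apply Continuous.mul ?_ hρ.continuous
    apply hdotc
    · intro i
      exact (hbc i).sub (continuous_const.mul (hALc i))
    · intro i
      exact (hg1.continuous.mul (gradc f hf1 i)).sub (hf1.continuous.mul (gradc g hg1 i))
  have hint₁ : Integrable I₁ := by
    apply hcont₁.integrable_of_hasCompactSupport
    apply HasCompactSupport.intro hK
    intro x hx
    simp only [Set.mem_union, not_or] at hx
    have hgx : g x = 0 := image_eq_zero_of_notMem_tsupport hx.2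
    simp [hI₁def, hgx]
  have hint₂ : Integrable I₂ := by
    apply hcont₂.integrable_of_hasCompactSupport
    apply HasCompactSupport.intro hK
    intro x hx
    simp only [Set.mem_union, not_or] at hx
    have hfx : f x = 0 := image_eq_zero_of_notMem_tsupport hx.1
    simp [hI₂def, hfx]
  have hint₃ : Integrable I₃ := by
    apply hcont₃.integrable_of_hasCompactSupport
    apply HasCompactSupport.intro hK
    intro x hx
    simp only [Set.mem_union, not_or] at hx
    have hfx : f x = 0 := image_eq_zero_of_notMem_tsupport hx.1
    have hgx : g x = 0 := image_eq_zero_of_notMem_tsupport hx.2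
    simp [hI₃def, hfx, hgx]
  -- final assembly
  have hz : ∫ x, dive w x = 0 := integral_dive_eq_zero w hwC hwsupp
  have h0 : ∫ x, (I₁ x - I₂ x - I₃ x) = 0 := by
    rw [integral_congr_ae (Filter.Eventually.of_forall hpt)]
    exact hz
  have e : ∫ x, (I₁ x - I₂ x - I₃ x) = (∫ x, I₁ x) - (∫ x, I₂ x) - (∫ x, I₃ x) := by
    have h12 : Integrable (fun x => I₁ x - I₂ x) := by
      have := hint₁.sub hint₂
      simpa [Pi.sub_def] using this
    have h1 := integral_sub h12 hint₃
    have h2 := integral_sub hint₁ hint₂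
    rw [h1, h2]
  show (∫ x, I₁ x) - (∫ x, I₂ x) = ∫ x, I₃ x
  rw [e] at h0
  linarith
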